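/- (TransRL with uniform teacher equals SAC, value form.) Suppose π_TC s is the uniform PMF on A for every s, and let n = |A|. For a full-support policy π, let V^π(s) = Σ_a (π s a) · (Q^π(s,a) + α · log((π_TC s a)/(π s a))) be the TransRL auxiliary value and V^{π,H}(s) = Σ_a (π s a) · (Q^{π,H}(s,a) − α · log(π s a)) the SAC soft value, where Q^π and Q^{π,H} are the unique fixed points of the augmented and soft Bellman operators respectively. Then V^π(s) = V^{π,H}(s) − α · log n / (1 − γ) for every s; consequently, a full-support policy π maximizes V^π(s) simultaneously for all s over full-support policies if and only if it maximizes V^{π,H}(s) simultaneously for all s. -/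

import Mathlib

open scoped BigOperators

variable {S A : Type*}

/-- A policy has full support if it assigns positive probability to every action
in every state. -/
def FullSupport (π : S → PMF A) : Prop :=
  ∀ s a, 0 < ((π s) a).toReal

/-- The augmented Bellman operator of TransRL:
`(T_π Q)(s,a) = r s a + γ · Σ_{s'} p(s'|s,a) · Σ_{a'} π(a'|s') ·
  (Q(s',a') + α · log(π_TC(a'|s') / π(a'|s')))`,
where terms with `π(a'|s') = 0` contribute `0`. -/
noncomputable def augBellman [Fintype S] [Fintype A]
    (p : S → A → PMF S) (r : S → A → ℝ) (γ α : ℝ) (πTC : S → PMF A)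
    (π : S → PMF A) (Q : S → A → ℝ) : S → A → ℝ :=
  fun s a => r s a + γ * ∑ s' : S, ((p s a) s').toReal *
    ∑ a' : A, ((π s') a').toReal *
      (Q s' a' + α * Real.log (((πTC s') a').toReal / ((π s') a').toReal))

/-- The per-state policy improvement objective
`J_Q(π, s) = Σ_a π(a|s) · (log π(a|s) − log π_TC(a|s) − Q(s,a)/α)`,
with terms where `π(a|s) = 0` contributing `0`. -/
noncomputable def impObj [Fintype A] (πTC : S → PMF A) (α : ℝ)
    (Q : S → A → ℝ) (π : S → PMF A) (s : S) : ℝ :=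
  ∑ a : A, ((π s) a).toReal *
    (Real.log ((π s) a).toReal - Real.log (((πTC s) a).toReal) - Q s a / α)

/-- The auxiliary state value
`V(s) = Σ_a π(a|s) · (Q(s,a) + α · log(π_TC(a|s)/π(a|s)))`. -/
noncomputable def auxValue [Fintype A] (πTC : S → PMF A) (α : ℝ)
    (Q : S → A → ℝ) (π : S → PMF A) (s : S) : ℝ :=
  ∑ a : A, ((π s) a).toReal *
    (Q s a + α * Real.log (((πTC s) a).toReal / ((π s) a).toReal))

/-- The soft (SAC) Bellman operator:
`(T^H_π Q)(s,a) = r s a + γ · Σ_{s'} p(s'|s,a) · Σ_{a'} π(a'|s') ·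
  (Q(s',a') − α · log π(a'|s'))`. -/
noncomputable def softBellman [Fintype S] [Fintype A]
    (p : S → A → PMF S) (r : S → A → ℝ) (γ α : ℝ)
    (π : S → PMF A) (Q : S → A → ℝ) : S → A → ℝ :=
  fun s a => r s a + γ * ∑ s' : S, ((p s a) s').toReal *
    ∑ a' : A, ((π s') a').toReal * (Q s' a' - α * Real.log (((π s') a').toReal))


lemma pmf_sum_toReal {B : Type*} [Fintype B] (q : PMF B) :
    ∑ b : B, (q b).toReal = 1 := by
  have h : ∑ b : B, q b = 1 := by have := q.tsum_coe; rwa [tsum_fintype] at this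
  rw [← ENNReal.toReal_sum (fun b _ => q.apply_ne_top b), h, ENNReal.toReal_one]

lemma aug_fixed_unique [Fintype S] [Fintype A] [Nonempty S] [Nonempty A]
    (p : S → A → PMF S) (r : S → A → ℝ) {γ : ℝ} (α : ℝ) (πTC π : S → PMF A)
    (hγ0 : 0 ≤ γ) (hγ1 : γ < 1) (Q1 Q2 : S → A → ℝ)
    (h1 : augBellman p r γ α πTC π Q1 = Q1)
    (h2 : augBellman p r γ α πTC π Q2 = Q2) : Q1 = Q2 := by
  have hD : ∀ s a, Q1 s a - Q2 s a = γ * ∑ s' : S, ((p s a) s').toReal *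
      ∑ a' : A, ((π s') a').toReal * (Q1 s' a' - Q2 s' a') := by
    intro s a
    have e1 := congrFun (congrFun h1 s) a
    have e2 := congrFun (congrFun h2 s) a
    simp only [augBellman] at e1 e2
    have step : Q1 s a - Q2 s a =
        γ * ((∑ s' : S, ((p s a) s').toReal * ∑ a' : A, ((π s') a').toReal *
              (Q1 s' a' + α * Real.log (((πTC s') a').toReal / ((π s') a').toReal))) -
            ∑ s' : S, ((p s a) s').toReal * ∑ a' : A, ((π s') a').toReal *
              (Q2 s' a' + α * Real.log (((πTC s') a').toReal / ((π s') a').toReal))) := by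
      rw [← e1, ← e2]; ring
    rw [step]
    congr 1
    rw [← Finset.sum_sub_distrib]
    refine Finset.sum_congr rfl fun s' _ => ?_
    rw [← mul_sub, ← Finset.sum_sub_distrib]
    congr 1
    refine Finset.sum_congr rfl fun a' _ => ?_
    ring
  obtain ⟨x, -, hmax⟩ := Finset.exists_max_image (Finset.univ : Finset (S × A))
    (fun sa => |Q1 sa.1 sa.2 - Q2 sa.1 sa.2|) ⟨Classical.arbitrary _, Finset.mem_univ _⟩
  set M := |Q1 x.1 x.2 - Q2 x.1 x.2| with hMdef
  have hM0 : 0 ≤ M := abs_nonneg _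
  have hb : ∀ s a, |Q1 s a - Q2 s a| ≤ M := fun s a => hmax (s, a) (Finset.mem_univ _)
  have hMle : M ≤ γ * M := by
    calc M = |γ * ∑ s' : S, ((p x.1 x.2) s').toReal *
          ∑ a' : A, ((π s') a').toReal * (Q1 s' a' - Q2 s' a')| := by
          rw [hMdef, hD x.1 x.2]
      _ = γ * |∑ s' : S, ((p x.1 x.2) s').toReal *
          ∑ a' : A, ((π s') a').toReal * (Q1 s' a' - Q2 s' a')| := by
          rw [abs_mul, abs_of_nonneg hγ0]
      _ ≤ γ * M := by
          refine mul_le_mul_of_nonneg_left ?_ hγ0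
          calc |∑ s' : S, ((p x.1 x.2) s').toReal *
                ∑ a' : A, ((π s') a').toReal * (Q1 s' a' - Q2 s' a')|
              ≤ ∑ s' : S, |((p x.1 x.2) s').toReal *
                ∑ a' : A, ((π s') a').toReal * (Q1 s' a' - Q2 s' a')| :=
                Finset.abs_sum_le_sum_abs _ _
            _ ≤ ∑ s' : S, ((p x.1 x.2) s').toReal * M := by
                refine Finset.sum_le_sum fun s' _ => ?_
                rw [abs_mul, abs_of_nonneg ENNReal.toReal_nonneg]
                refine mul_le_mul_of_nonneg_left ?_ ENNReal.toReal_nonneg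
                calc |∑ a' : A, ((π s') a').toReal * (Q1 s' a' - Q2 s' a')|
                    ≤ ∑ a' : A, |((π s') a').toReal * (Q1 s' a' - Q2 s' a')| :=
                      Finset.abs_sum_le_sum_abs _ _
                  _ ≤ ∑ a' : A, ((π s') a').toReal * M := by
                      refine Finset.sum_le_sum fun a' _ => ?_
                      rw [abs_mul, abs_of_nonneg ENNReal.toReal_nonneg]
                      exact mul_le_mul_of_nonneg_left (hb s' a') ENNReal.toReal_nonneg
                  _ = M := by rw [← Finset.sum_mul, pmf_sum_toReal, one_mul]
            _ = M := by rw [← Finset.sum_mul, pmf_sum_toReal, one_mul]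
  have hM : M = 0 := le_antisymm (by nlinarith) hM0
  funext s a
  have h := hb s a
  rw [hM] at h
  have := abs_nonpos_iff.mp h
  linarith

theorem uniform_teacher_value_eq_sac_value [Fintype S] [Fintype A] [Nonempty S] [Nonempty A]
    (p : S → A → PMF S) (r : S → A → ℝ) (γ α : ℝ)
    (hγ0 : 0 ≤ γ) (hγ1 : γ < 1) (hα : 0 < α)
    (πTC : S → PMF A)
    (hTCu : ∀ s a, ((πTC s) a).toReal = 1 / (Fintype.card A : ℝ))
    (Qaug Qsoft : (S → PMF A) → S → A → ℝ)
    (hQaug : ∀ π : S → PMF A, FullSupport π →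
      augBellman p r γ α πTC π (Qaug π) = Qaug π)
    (hQsoft : ∀ π : S → PMF A, FullSupport π →
      softBellman p r γ α π (Qsoft π) = Qsoft π) :
    (∀ π : S → PMF A, FullSupport π → ∀ s,
      auxValue πTC α (Qaug π) π s =
        (∑ a : A, ((π s) a).toReal *
            (Qsoft π s a - α * Real.log (((π s) a).toReal))) -
          α * Real.log (Fintype.card A : ℝ) / (1 - γ)) ∧
    ∀ π0 : S → PMF A, FullSupport π0 →
      ((∀ π : S → PMF A, FullSupport π → ∀ s,
          auxValue πTC α (Qaug π) π s ≤ auxValue πTC α (Qaug π0) π0 s) ↔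
        (∀ π : S → PMF A, FullSupport π → ∀ s,
          (∑ a : A, ((π s) a).toReal *
              (Qsoft π s a - α * Real.log (((π s) a).toReal))) ≤
            ∑ a : A, ((π0 s) a).toReal *
              (Qsoft π0 s a - α * Real.log (((π0 s) a).toReal)))) := by
  have h1γ : (0:ℝ) < 1 - γ := by linarith
  have hn : (0:ℝ) < (Fintype.card A : ℝ) := by
    exact_mod_cast Fintype.card_pos
  set L : ℝ := Real.log (Fintype.card A : ℝ) with hLdef
  set c : ℝ := γ * α * L / (1 - γ) with hcdef
  have hcγ : γ * (c + α * L) = c := by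
    rw [hcdef]; field_simp; ring
  have hcL : c + α * L = α * L / (1 - γ) := by
    rw [hcdef]; field_simp; ring
  have hlog : ∀ (π : S → PMF A), FullSupport π → ∀ s a,
      Real.log (((πTC s) a).toReal / ((π s) a).toReal) =
        -L - Real.log (((π s) a).toReal) := by
    intro π hπ s a
    rw [hTCu s a, one_div, Real.log_div (inv_ne_zero hn.ne') (hπ s a).ne',
      Real.log_inv]
  have hfix : ∀ π : S → PMF A, FullSupport π →
      Qaug π = fun s a => Qsoft π s a - c := by
    intro π hπ
    refine aug_fixed_unique p r α πTC π hγ0 hγ1 _ _ (hQaug π hπ) ?_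
    funext s a
    have hsoft := congrFun (congrFun (hQsoft π hπ) s) a
    simp only [augBellman, softBellman] at hsoft ⊢
    have hinner : ∀ s' : S,
        ∑ a' : A, ((π s') a').toReal * (Qsoft π s' a' - c +
            α * Real.log (((πTC s') a').toReal / ((π s') a').toReal)) =
          (∑ a' : A, ((π s') a').toReal *
            (Qsoft π s' a' - α * Real.log (((π s') a').toReal))) - (c + α * L) := by
      intro s'
      calc ∑ a' : A, ((π s') a').toReal * (Qsoft π s' a' - c +
              α * Real.log (((πTC s') a').toReal / ((π s') a').toReal))
          = ∑ a' : A, (((π s') a').toReal *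
              (Qsoft π s' a' - α * Real.log (((π s') a').toReal)) -
              ((π s') a').toReal * (c + α * L)) := by
            refine Finset.sum_congr rfl fun a' _ => ?_
            rw [hlog π hπ s' a']; ring
        _ = (∑ a' : A, ((π s') a').toReal *
              (Qsoft π s' a' - α * Real.log (((π s') a').toReal))) -
            ∑ a' : A, ((π s') a').toReal * (c + α * L) := Finset.sum_sub_distrib _ _
        _ = _ := by rw [← Finset.sum_mul, pmf_sum_toReal, one_mul]
    calc r s a + γ * ∑ s' : S, ((p s a) s').toReal *
          ∑ a' : A, ((π s') a').toReal * (Qsoft π s' a' - c +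
            α * Real.log (((πTC s') a').toReal / ((π s') a').toReal))
        = r s a + γ * ((∑ s' : S, ((p s a) s').toReal *
            ∑ a' : A, ((π s') a').toReal *
              (Qsoft π s' a' - α * Real.log (((π s') a').toReal))) - (c + α * L)) := by
          congr 1
          congr 1
          calc ∑ s' : S, ((p s a) s').toReal *
                ∑ a' : A, ((π s') a').toReal * (Qsoft π s' a' - c +
                  α * Real.log (((πTC s') a').toReal / ((π s') a').toReal))
              = ∑ s' : S, (((p s a) s').toReal *
                  (∑ a' : A, ((π s') a').toReal *
                    (Qsoft π s' a' - α * Real.log (((π s') a').toReal))) -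
                  ((p s a) s').toReal * (c + α * L)) := by
                refine Finset.sum_congr rfl fun s' _ => ?_
                rw [hinner s']; ring
            _ = (∑ s' : S, ((p s a) s').toReal *
                  ∑ a' : A, ((π s') a').toReal *
                    (Qsoft π s' a' - α * Real.log (((π s') a').toReal))) -
                ∑ s' : S, ((p s a) s').toReal * (c + α * L) := Finset.sum_sub_distrib _ _
            _ = _ := by rw [← Finset.sum_mul, pmf_sum_toReal, one_mul]
      _ = (r s a + γ * ∑ s' : S, ((p s a) s').toReal *
            ∑ a' : A, ((π s') a').toReal *
              (Qsoft π s' a' - α * Real.log (((π s') a').toReal))) -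
          γ * (c + α * L) := by ring
      _ = Qsoft π s a - c := by rw [hsoft, hcγ]
  have hval : ∀ π : S → PMF A, FullSupport π → ∀ s,
      auxValue πTC α (Qaug π) π s =
        (∑ a : A, ((π s) a).toReal *
            (Qsoft π s a - α * Real.log (((π s) a).toReal))) -
          α * Real.log (Fintype.card A : ℝ) / (1 - γ) := by
    intro π hπ s
    rw [auxValue, hfix π hπ]
    calc ∑ a : A, ((π s) a).toReal * (Qsoft π s a - c +
            α * Real.log (((πTC s) a).toReal / ((π s) a).toReal))
        = ∑ a : A, (((π s) a).toReal *
            (Qsoft π s a - α * Real.log (((π s) a).toReal)) -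
            ((π s) a).toReal * (c + α * L)) := by
          refine Finset.sum_congr rfl fun a _ => ?_
          rw [hlog π hπ s a]; ring
      _ = (∑ a : A, ((π s) a).toReal *
            (Qsoft π s a - α * Real.log (((π s) a).toReal))) -
          ∑ a : A, ((π s) a).toReal * (c + α * L) := Finset.sum_sub_distrib _ _
      _ = (∑ a : A, ((π s) a).toReal *
            (Qsoft π s a - α * Real.log (((π s) a).toReal))) - (c + α * L) := by
          rw [← Finset.sum_mul, pmf_sum_toReal, one_mul]
      _ = _ := by rw [hcL, hLdef]
  refine ⟨hval, fun π0 hπ0 => ?_⟩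
  constructor
  · intro h π hπ s
    have e1 := hval π hπ s
    have e0 := hval π0 hπ0 s
    have := h π hπ s
    linarith
  · intro h π hπ s
    have e1 := hval π hπ s
    have e0 := hval π0 hπ0 s
    have := h π hπ s
    linarith
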